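/- Let X and Y be two k-dimensional subspaces of F_q^n with the same identifying vector, v(X) = v(Y). Then d_S(X,Y) = 2·rank(RE(X) − RE(Y)). -/

import Mathlib

/-- `M` is in reduced row echelon form with pivot (leading-one) column of row `i`
given by `piv i`: pivots strictly move right, each leading coefficient is `1`,
it is the first nonzero entry of its row, and it is the only nonzero entry of
its column. -/
def IsRREFWithPivots {F : Type*} [Field F] {k n : ℕ}
    (M : Matrix (Fin k) (Fin n) F) (piv : Fin k → Fin n) : Prop :=
  StrictMono piv ∧
  (∀ i, M i (piv i) = 1) ∧
  (∀ (i : Fin k) (j : Fin n), j < piv i → M i j = 0) ∧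
  (∀ i i' : Fin k, i' ≠ i → M i' (piv i) = 0)

/-- `M` is in reduced row echelon form. -/
def IsRREF {F : Type*} [Field F] {k n : ℕ} (M : Matrix (Fin k) (Fin n) F) : Prop :=
  ∃ piv, IsRREFWithPivots M piv

/-- The identifying (binary) vector associated with pivot columns `piv`:
its ones are exactly in the pivot positions. -/
def idVec {k n : ℕ} (piv : Fin k → Fin n) : Fin n → Bool :=
  fun j => decide (∃ i, piv i = j)

/-- The subspace distance `d_S(X,Y) = dim X + dim Y - 2 dim (X ⊓ Y)`. -/
noncomputable def subDist {F : Type*} [Field F] {n : ℕ} (X Y : Submodule F (Fin n → F)) : ℕ :=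
  Module.finrank F X + Module.finrank F Y - 2 * Module.finrank F ↥(X ⊓ Y)

/-- Evaluating a row combination of an RREF matrix at a pivot column
recovers the coefficient. -/
lemma vecMul_apply_piv {F : Type*} [Field F] {k n : ℕ}
    {M : Matrix (Fin k) (Fin n) F} {piv : Fin k → Fin n}
    (hM : IsRREFWithPivots M piv) (a : Fin k → F) (i : Fin k) :
    Matrix.vecMul a M (piv i) = a i := by
  obtain ⟨-, h1, -, h0⟩ := hM
  simp only [Matrix.vecMul, dotProduct]
  rw [Finset.sum_eq_single i]
  · rw [h1 i, mul_one]
  · intro b _ hb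
    rw [h0 i b hb, mul_zero]
  · intro h; exact absurd (Finset.mem_univ i) h

lemma vecMulLinear_inj {F : Type*} [Field F] {k n : ℕ}
    {M : Matrix (Fin k) (Fin n) F} {piv : Fin k → Fin n}
    (hM : IsRREFWithPivots M piv) : Function.Injective M.vecMulLinear := by
  intro a b hab
  funext i
  have := congrFun hab (piv i)
  simpa [vecMul_apply_piv hM] using this

/-- **Corollary 3 of the paper.** If `X` and `Y` are
`k`-dimensional subspaces of `F_q^n` with the same identifying vector, then
`d_S(X,Y) = 2 rank(RE(X) - RE(Y))`. -/
theorem subDist_eq_two_rank_sub {F : Type*} [Field F] [Fintype F] {n k : ℕ}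
    (X Y : Submodule F (Fin n → F))
    (MX : Matrix (Fin k) (Fin n) F) (pivX : Fin k → Fin n)
    (hMX : IsRREFWithPivots MX pivX)
    (hsX : Submodule.span F (Set.range MX) = X)
    (MY : Matrix (Fin k) (Fin n) F) (pivY : Fin k → Fin n)
    (hMY : IsRREFWithPivots MY pivY)
    (hsY : Submodule.span F (Set.range MY) = Y)
    (hid : idVec pivX = idVec pivY) :
    subDist X Y = 2 * (MX - MY).rank := by
  classical
  -- pivots coincide
  have hrange : Set.range pivX = Set.range pivY := by
    ext j
    have := congrFun hid j
    simp only [idVec, decide_eq_decide] at this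
    simpa [Set.mem_range] using this
  have hpiv : pivX = pivY := by
    have inst : WellFoundedLT (Fin k) := inferInstance
    exact (@StrictMono.range_inj (Fin k) (Fin n) _ _ inst _ _ hMX.1 hMY.1).mp hrange
  subst hpiv
  -- express the spaces as ranges of vecMulLinear
  have hX : LinearMap.range MX.vecMulLinear = X := by
    rw [range_vecMulLinear]; exact hsX
  have hY : LinearMap.range MY.vecMulLinear = Y := by
    rw [range_vecMulLinear]; exact hsY
  have hinjX := vecMulLinear_inj hMX
  have hinjY := vecMulLinear_inj hMY
  -- dimensions of X and Y
  have hdX : Module.finrank F X = k := by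
    rw [← hX, LinearMap.finrank_range_of_inj hinjX, Module.finrank_fin_fun]
  have hdY : Module.finrank F Y = k := by
    rw [← hY, LinearMap.finrank_range_of_inj hinjY, Module.finrank_fin_fun]
  -- the intersection is the image of the kernel of (MX - MY).vecMulLinear
  have hker : X ⊓ Y =
      Submodule.map MX.vecMulLinear (LinearMap.ker (MX - MY).vecMulLinear) := by
    apply le_antisymm
    · rintro v ⟨hvX, hvY⟩
      rw [← hX] at hvX
      rw [← hY] at hvY
      obtain ⟨a, ha⟩ := hvX
      obtain ⟨b, hb⟩ := hvY
      have hab : a = b := by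
        funext i
        have h1 : v (pivX i) = a i := by
          rw [← ha]; exact vecMul_apply_piv hMX a i
        have h2 : v (pivX i) = b i := by
          rw [← hb]; exact vecMul_apply_piv hMY b i
        rw [← h1, h2]
      refine Submodule.mem_map.mpr ⟨a, LinearMap.mem_ker.mpr ?_, ha⟩
      simp only [Matrix.vecMulLinear_apply, Matrix.vecMul_sub]
      rw [hab] at ha ⊢
      simp only [Matrix.vecMulLinear_apply] at ha hb
      rw [ha, hb, sub_self]
    · rintro v ⟨a, haker, rfl⟩
      simp only [SetLike.mem_coe, LinearMap.mem_ker] at haker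
      simp only [Matrix.vecMulLinear_apply, Matrix.vecMul_sub, sub_eq_zero] at haker
      constructor
      · rw [← hX]; exact ⟨a, rfl⟩
      · rw [← hY]; exact ⟨a, by simp [haker]⟩
  -- rank of the difference
  have hrank : (MX - MY).rank =
      Module.finrank F (LinearMap.range (MX - MY).vecMulLinear) := by
    rw [Matrix.rank_eq_finrank_span_row, range_vecMulLinear]
  -- rank-nullity for (MX - MY).vecMulLinear
  have hrn := LinearMap.finrank_range_add_finrank_ker ((MX - MY).vecMulLinear)
  rw [Module.finrank_fin_fun] at hrn
  -- dimension of the intersection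
  have hmap : Module.finrank F ↥(X ⊓ Y) =
      Module.finrank F (LinearMap.ker (MX - MY).vecMulLinear) := by
    rw [hker]
    exact (LinearEquiv.finrank_eq
      (Submodule.equivMapOfInjective MX.vecMulLinear hinjX
        (LinearMap.ker (MX - MY).vecMulLinear))).symm
  have hle : (MX - MY).rank ≤ k := by
    have := Matrix.rank_le_card_height (MX - MY)
    simpa using this
  unfold subDist
  rw [hdX, hdY, hmap]
  omega
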